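/- Let a : ℕ → ℝ be the sequence defined by a 0 = 0, a 1 = 0, a 2 = −1, and a k = −2·a (k−2) / (k·(k−1)·(k−2)) for all k ≥ 3. Then for every k ≥ 2, |a (2k)| < 1 / (2^k · ((k−1)!)³). -/

import Mathlib

/-- The logarithmic coefficients `a k` in the series expansion of `2 J₁`. -/
noncomputable def abramowitzA : ℕ → ℝ
  | 0 => 0
  | 1 => 0
  | 2 => -1
  | (k + 3) =>
      -2 * abramowitzA (k + 1) / (((k : ℝ) + 3) * ((k : ℝ) + 2) * ((k : ℝ) + 1))

theorem abramowitzA_bound (k : ℕ) (hk : 2 ≤ k) :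
    |abramowitzA (2 * k)| < 1 / (2 ^ k * (Nat.factorial (k - 1) : ℝ) ^ 3) := by
  induction k, hk using Nat.le_induction with
  | base =>
    have h4 : (2 * 2 : ℕ) = 1 + 3 := by norm_num
    rw [h4]
    simp only [abramowitzA]
    norm_num [abs]
  | succ n hn ih =>
    obtain ⟨m, rfl⟩ : ∃ m, n = m + 2 := ⟨n - 2, by omega⟩
    have h4 : |abramowitzA (2 * m + 4)| < 1 / (2 ^ (m+2) * (Nat.factorial (m+1) : ℝ) ^ 3) := by
      have := ih
      have e : 2 * (m + 2) = 2 * m + 4 := by ring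
      have e2 : m + 2 - 1 = m + 1 := by omega
      rwa [e, e2] at this
    have eidx : 2 * (m + 2 + 1) = (2 * m + 3) + 3 := by ring
    rw [eidx, abramowitzA]
    have e3 : (2 * m + 3 : ℕ) + 1 = 2 * m + 4 := by omega
    rw [e3]
    set X := |abramowitzA (2 * m + 4)| with hX
    have hXnn : 0 ≤ X := abs_nonneg _
    set f : ℝ := (Nat.factorial (m+1) : ℝ) with hf
    have hfpos : 0 < f := by positivity
    have hM : ((2*m+3 : ℕ) : ℝ) = 2 * (m:ℝ) + 3 := by push_cast; ring
    set x : ℝ := (m : ℝ) with hx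
    have hxnn : 0 ≤ x := Nat.cast_nonneg m
    have hDpos : 0 < (((2*m+3 : ℕ) : ℝ) + 3) * (((2*m+3:ℕ):ℝ) + 2) * (((2*m+3:ℕ):ℝ) + 1) := by
      rw [hM]; positivity
    have habs : |(-2 : ℝ) * abramowitzA (2 * m + 4) /
        ((((2*m+3 : ℕ) : ℝ) + 3) * (((2*m+3:ℕ):ℝ) + 2) * (((2*m+3:ℕ):ℝ) + 1))| =
        2 * X / ((((2*m+3 : ℕ) : ℝ) + 3) * (((2*m+3:ℕ):ℝ) + 2) * (((2*m+3:ℕ):ℝ) + 1)) := by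
      rw [abs_div, abs_mul, abs_of_pos hDpos]
      norm_num
      rfl
    rw [habs, hM]
    have efact : (Nat.factorial (m + 2 + 1 - 1) : ℝ) = (x + 2) * f := by
      have : m + 2 + 1 - 1 = m + 2 := by omega
      rw [this, Nat.factorial_succ]
      push_cast [hf, hx]
      ring
    rw [efact]
    have hDpos' : 0 < (2 * x + 3 + 3) * (2 * x + 3 + 2) * (2 * x + 3 + 1) := by positivity
    have hPpos : (0:ℝ) < 2 ^ (m + 2) := by positivity
    calc 2 * X / ((2 * x + 3 + 3) * (2 * x + 3 + 2) * (2 * x + 3 + 1))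
        < 2 * (1 / (2 ^ (m+2) * f ^ 3)) / ((2 * x + 3 + 3) * (2 * x + 3 + 2) * (2 * x + 3 + 1)) := by
          gcongr
      _ ≤ 1 / (2 ^ (m + 2 + 1) * ((x + 2) * f) ^ 3) := by
          rw [show (2:ℝ)^(m+2+1) = 2^(m+2)*2 from pow_succ 2 (m+2), mul_one_div, div_div,
            div_le_div_iff₀ (by positivity) (by positivity)]
          have key : 4 * (x + 2) ^ 3 ≤ (2 * x + 6) * (2 * x + 5) * (2 * x + 4) := by
            nlinarith [sq_nonneg x, hxnn]
          nlinarith [mul_pos hPpos (pow_pos hfpos 3), mul_le_mul_of_nonneg_right key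
            (le_of_lt (mul_pos hPpos (pow_pos hfpos 3)))]
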